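/- Suppose a real function F in the modulation space M¹₂(ℝ^{2n}) with finite covariance matrix satisfies the refined Robertson–Schrödinger uncertainty principle: Cov(F) + (iħ/2)J ≥ 𝒫[F]·( Cov(|F̃|²) + (1/4)Cov(|𝓕_σF̃|²) + (iħ/2)J ) ≥ 0. Then for every S in ASp(n) (i.e. every real 2n×2n matrix with SᵀJS = J or SᵀJS = −J), the function F∘S also satisfies the refined Robertson–Schrödinger uncertainty principle. -/

import Mathlib

open MeasureTheory Matrix Complex Real
open scoped BigOperators ComplexConjugate ComplexOrder

noncomputable section

namespace RSUP

/-- Phase space `ℝ^{2n}`. -/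
abbrev PS (n : ℕ) := Fin (2*n) → ℝ

/-- Configuration space `ℝⁿ`. -/
abbrev CS (n : ℕ) := Fin n → ℝ

/-- The standard symplectic matrix `J = [[0, I],[−I, 0]]`. -/
def J (n : ℕ) : Matrix (Fin (2*n)) (Fin (2*n)) ℝ :=
  Matrix.of fun i j =>
    if (i : ℕ) + n = (j : ℕ) then 1 else if (j : ℕ) + n = (i : ℕ) then -1 else 0

/-- `J` as a complex matrix. -/
def Jc (n : ℕ) : Matrix (Fin (2*n)) (Fin (2*n)) ℂ := (J n).map (fun x => (x : ℂ))

/-- The standard symplectic form `σ(z,w) = z ⬝ Jᵀ w = p·x' − x·p'`. -/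
def symplForm (n : ℕ) (z w : PS n) : ℝ := z ⬝ᵥ ((J n)ᵀ *ᵥ w)

/-- The symplectic Fourier transform `(𝓕_σ F)(ζ) = (2πhb)^{−n} ∫ F(z) e^{−(i/hb)σ(ζ,z)} dz`. -/
def symplFT (n : ℕ) (hb : ℝ) (F : PS n → ℂ) : PS n → ℂ := fun ζ =>
  ((2 * π * hb) ^ n)⁻¹ • ∫ z : PS n, F z * Complex.exp (-(Complex.I / (hb:ℂ)) * ((symplForm n ζ z : ℝ) : ℂ))

/-- The hb-scaled Fourier transform on phase space,
`(𝓕_hb F)(ζ) = (2πhb)^{−n} ∫ F(z) e^{−(i/hb) z·ζ} dz`. -/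
def hbarFT (n : ℕ) (hb : ℝ) (F : PS n → ℂ) : PS n → ℂ := fun ζ =>
  ((2 * π * hb) ^ n)⁻¹ • ∫ z : PS n, F z * Complex.exp (-(Complex.I / (hb:ℂ)) * (((∑ i, z i * ζ i) : ℝ) : ℂ))

/-- The Plancherel–Fourier transform on `ℝ^d`. -/
def FT {d : ℕ} (F : (Fin d → ℝ) → ℂ) : (Fin d → ℝ) → ℂ := fun ω =>
  ∫ x : Fin d → ℝ, F x * Complex.exp (-(2 * π * Complex.I) * (((∑ i, x i * ω i) : ℝ) : ℂ))

/-- Membership in the modulation space `M¹₂(ℝ^d)`: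
`F ∈ L²` and `∫ (1+|z|²)(|F(z)|² + |𝓕F(z)|²) dz < ∞`. -/
def InM12 {d : ℕ} (F : (Fin d → ℝ) → ℂ) : Prop :=
  MemLp F 2 (volume : Measure (Fin d → ℝ)) ∧
  Integrable (fun z : Fin d → ℝ => (1 + ∑ i, z i ^ 2) * (‖F z‖ ^ 2 + ‖FT F z‖ ^ 2)) volume

/-- The mean vector `⟨z⟩_F = ∫ z F(z) dz / ∫ F(z) dz`. -/
def meanVec {d : ℕ} (F : (Fin d → ℝ) → ℝ) : Fin d → ℝ := fun i =>
  (∫ z : Fin d → ℝ, z i * F z) / (∫ z : Fin d → ℝ, F z)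

/-- The covariance matrix `Cov(F) = ∫ (z−⟨z⟩)(z−⟨z⟩)ᵀ F(z) dz / ∫ F(z) dz`. -/
def Cov {d : ℕ} (F : (Fin d → ℝ) → ℝ) : Matrix (Fin d) (Fin d) ℝ :=
  Matrix.of fun i j =>
    (∫ z : Fin d → ℝ, (z i - meanVec F i) * (z j - meanVec F j) * F z) / (∫ z : Fin d → ℝ, F z)

/-- Finiteness of the covariance matrix of `F` (integrability of all second moments). -/
def HasFiniteCov {d : ℕ} (F : (Fin d → ℝ) → ℝ) : Prop :=
  Integrable F (volume : Measure (Fin d → ℝ)) ∧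
  (∀ i, Integrable (fun z : Fin d → ℝ => z i * F z) volume) ∧
  (∀ i j, Integrable (fun z : Fin d → ℝ => z i * z j * F z) volume)

/-- The purity `𝒫[F] = (2πhb)ⁿ ∫ F(z)² dz`. -/
def purity (n : ℕ) (hb : ℝ) (F : PS n → ℝ) : ℝ := (2 * π * hb) ^ n * ∫ z : PS n, F z ^ 2

/-- `|F̃|²`, the probability density obtained by `L²`-normalizing `F` and squaring. -/
def normSq2 {d : ℕ} (F : (Fin d → ℝ) → ℝ) : (Fin d → ℝ) → ℝ := fun z =>
  F z ^ 2 / ∫ w : Fin d → ℝ, F w ^ 2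

/-- `|𝓕_σ F̃|²`, where `F̃ = F/‖F‖_{L²}`. -/
def nFTsq (n : ℕ) (hb : ℝ) (F : PS n → ℝ) : PS n → ℝ := fun z =>
  ‖symplFT n hb (fun w => (F w : ℂ)) z‖ ^ 2 / ∫ w : PS n, F w ^ 2

/-- `|𝓕_hb F̃|²`, where `F̃ = F/‖F‖_{L²}`. -/
def nhFTsq (n : ℕ) (hb : ℝ) (F : PS n → ℝ) : PS n → ℝ := fun z =>
  ‖hbarFT n hb (fun w => (F w : ℂ)) z‖ ^ 2 / ∫ w : PS n, F w ^ 2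

/-- The Hermitian matrix `A + (ihb/2) J` on `ℂ^{2n}`. -/
def RSmat (n : ℕ) (hb : ℝ) (A : Matrix (Fin (2*n)) (Fin (2*n)) ℝ) :
    Matrix (Fin (2*n)) (Fin (2*n)) ℂ :=
  A.map (fun x => (x : ℂ)) + (hb / 2) • Complex.I • Jc n

/-- The right-hand side of the refined Robertson–Schrödinger uncertainty principle,
`𝒫[F] ( Cov(|F̃|²) + ¼ Cov(|𝓕_σF̃|²) + (ihb/2)J )`. -/
def refinedMat (n : ℕ) (hb : ℝ) (F : PS n → ℝ) : Matrix (Fin (2*n)) (Fin (2*n)) ℂ :=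
  purity n hb F • RSmat n hb (Cov (normSq2 F) + (4 : ℝ)⁻¹ • Cov (nFTsq n hb F))

/-- The refined Robertson–Schrödinger uncertainty principle for `F`:
`Cov(F) + (ihb/2)J ≥ 𝒫[F](Cov(|F̃|²) + ¼ Cov(|𝓕_σF̃|²) + (ihb/2)J) ≥ 0`. -/
def SatisfiesRefinedRSUP (n : ℕ) (hb : ℝ) (F : PS n → ℝ) : Prop :=
  (RSmat n hb (Cov F) - refinedMat n hb F).PosSemidef ∧ (refinedMat n hb F).PosSemidef

/-- The position part of a phase space point. -/
def xpart {n : ℕ} (z : PS n) : CS n := fun i => z ⟨i.val, by have := i.isLt; omega⟩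

/-- The momentum part of a phase space point. -/
def ppart {n : ℕ} (z : PS n) : CS n := fun i => z ⟨n + i.val, by have := i.isLt; omega⟩

/-- The Wigner transform of a pure state `f`:
`Wf(x,p) = (2πhb)^{−n} ∫ f(x+y/2) conj(f(x−y/2)) e^{−(i/hb)p·y} dy`. -/
def Wig (n : ℕ) (hb : ℝ) (f : CS n → ℂ) : PS n → ℂ := fun z =>
  ((2 * π * hb) ^ n)⁻¹ • ∫ y : CS n,
    f (xpart z + (2 : ℝ)⁻¹ • y) * (starRingEnd ℂ) (f (xpart z - (2 : ℝ)⁻¹ • y)) *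
      Complex.exp (-(Complex.I / (hb:ℂ)) * (((∑ i, ppart z i * y i) : ℝ) : ℂ))

/-- A density matrix (positive self-adjoint trace-class operator on `L²(ℝⁿ)` of unit trace),
presented through its spectral decomposition `ρ̂ = Σ_k p_k |f_k⟩⟨f_k|` with `p_k ≥ 0`,
`Σ_k p_k = 1` and `(f_k)` orthonormal in `L²(ℝⁿ)`. -/
structure DensityOp (n : ℕ) where
  p : ℕ → ℝ
  f : ℕ → CS n → ℂ
  p_nonneg : ∀ k, 0 ≤ p k
  p_sum : HasSum p 1
  f_L2 : ∀ k, MemLp (f k) 2 (volume : Measure (CS n))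
  f_ortho : ∀ k l, ∫ x : CS n, (starRingEnd ℂ) (f k x) * f l x = if k = l then 1 else 0

/-- The Wigner distribution of a density matrix, `Wρ = Σ_k p_k W f_k`. -/
def WigMix (n : ℕ) (hb : ℝ) (ρ : DensityOp n) : PS n → ℂ := fun z =>
  ∑' k, (ρ.p k : ℂ) * Wig n hb (ρ.f k) z

/-- The state is pure, i.e. `ρ̂` is a rank-one orthogonal projection. -/
def DensityOp.IsPure {n : ℕ} (ρ : DensityOp n) : Prop := ∃ k, ρ.p k = 1

/-- `W` is the Wigner distribution of the density matrix `ρ`, is real,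
belongs to the modulation space `M¹₂(ℝ^{2n})` and has finite covariance matrix. -/
def IsWignerOf (n : ℕ) (hb : ℝ) (ρ : DensityOp n) (W : PS n → ℝ) : Prop :=
  (∀ z, WigMix n hb ρ z = (W z : ℂ)) ∧ InM12 (fun z => (W z : ℂ)) ∧ HasFiniteCov W

/-- The Boltzmann entropy `E(μ) = −∫ μ log μ`. -/
def entropy {d : ℕ} (μ : (Fin d → ℝ) → ℝ) : ℝ := -∫ z : Fin d → ℝ, μ z * Real.log (μ z)

/-- The Gaussian pure-state Wigner function with covariance matrix `B` centered at `z₀`. -/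
def gaussW (n : ℕ) (hb : ℝ) (B : Matrix (Fin (2*n)) (Fin (2*n)) ℝ) (z₀ : PS n) : PS n → ℝ :=
  fun z => ((π * hb) ^ n)⁻¹ * Real.exp (-(2:ℝ)⁻¹ * ((z - z₀) ⬝ᵥ (B⁻¹ *ᵥ (z - z₀))))

/-- `S ∈ Sp(n)`: `S` is a symplectic matrix. -/
def IsSymplectic (n : ℕ) (S : Matrix (Fin (2*n)) (Fin (2*n)) ℝ) : Prop :=
  Sᵀ * J n * S = J n

/-- The smallest symplectic eigenvalue of `B`: the smallest modulus of an eigenvalue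
of `B J⁻¹`. -/
def minSymplEig (n : ℕ) (B : Matrix (Fin (2*n)) (Fin (2*n)) ℝ) : ℝ :=
  sInf ((fun z : ℂ => ‖z‖) '' spectrum ℂ ((B * (J n)⁻¹).map (fun x => (x : ℂ))))

end RSUP

open RSUP MeasureTheory Matrix

namespace RSUPAux

theorem J_transpose (n : ℕ) : (J n)ᵀ = -(J n) := by
  ext i j
  have hi := i.isLt; have hj := j.isLt
  simp only [Matrix.transpose_apply, Matrix.neg_apply, RSUP.J, Matrix.of_apply]
  split_ifs <;> first | (exfalso; omega) | norm_num

theorem J_mul_J (n : ℕ) : J n * J n = -1 := by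
  ext i j
  have hi := i.isLt; have hj := j.isLt
  rw [Matrix.mul_apply]
  by_cases hcase : (i:ℕ) < n
  · rw [Finset.sum_eq_single (⟨(i:ℕ) + n, by omega⟩ : Fin (2*n))]
    · simp only [RSUP.J, Matrix.of_apply, Matrix.neg_apply, Matrix.one_apply, Fin.ext_iff]
      split_ifs <;> first | (exfalso; omega) | norm_num
    · intro k _ hk
      have hkv : (k:ℕ) ≠ (i:ℕ) + n := fun h => hk (Fin.ext h)
      have hk2 := k.isLt
      simp only [RSUP.J, Matrix.of_apply]
      rw [if_neg (by omega), if_neg (by omega), zero_mul]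
    · intro h; exact absurd (Finset.mem_univ _) h
  · rw [Finset.sum_eq_single (⟨(i:ℕ) - n, by omega⟩ : Fin (2*n))]
    · simp only [RSUP.J, Matrix.of_apply, Matrix.neg_apply, Matrix.one_apply, Fin.ext_iff]
      split_ifs <;> first | (exfalso; omega) | norm_num
    · intro k _ hk
      have hkv : (k:ℕ) ≠ (i:ℕ) - n := fun h => hk (Fin.ext h)
      have hk2 := k.isLt
      simp only [RSUP.J, Matrix.of_apply]
      rw [if_neg (by omega), if_neg (by omega), zero_mul]
    · intro h; exact absurd (Finset.mem_univ _) h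

theorem J_inv (n : ℕ) : (J n)⁻¹ = -(J n) :=
  Matrix.inv_eq_right_inv (by rw [mul_neg, J_mul_J, neg_neg])

theorem J_det_mul_self (n : ℕ) : (J n).det * (J n).det = 1 := by
  have h := congrArg Matrix.det (J_mul_J n)
  rwa [Matrix.det_mul, Matrix.det_neg, Matrix.det_one, mul_one, Fintype.card_fin,
    (even_two_mul n).neg_one_pow] at h

theorem J_det_ne_zero (n : ℕ) : (J n).det ≠ 0 := by
  intro h
  have := J_det_mul_self n
  rw [h, mul_zero] at this
  exact zero_ne_one this


section Smat
variable {n : ℕ} {S : Matrix (Fin (2*n)) (Fin (2*n)) ℝ}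

theorem neg_J_inv (n : ℕ) : (-(J n))⁻¹ = J n :=
  Matrix.inv_eq_right_inv (by rw [neg_mul, J_mul_J, neg_neg])

theorem det_S (hS : Sᵀ * J n * S = J n ∨ Sᵀ * J n * S = -(J n)) :
    S.det = 1 ∨ S.det = -1 := by
  have hd : S.det * S.det * (J n).det = (J n).det := by
    rcases hS with h | h
    · have h2 := congrArg Matrix.det h
      rw [Matrix.det_mul, Matrix.det_mul, Matrix.det_transpose] at h2
      linarith [h2]
    · have h2 := congrArg Matrix.det h
      rw [Matrix.det_mul, Matrix.det_mul, Matrix.det_transpose, Matrix.det_neg,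
        Fintype.card_fin, (even_two_mul n).neg_one_pow, one_mul] at h2
      linarith [h2]
  rw [← mul_self_eq_one_iff]
  have hJ := J_det_ne_zero n
  have : (S.det * S.det - 1) * (J n).det = 0 := by ring_nf; linarith [hd]
  rcases mul_eq_zero.mp this with h | h
  · linarith [h]
  · exact absurd h hJ

theorem isUnit_det_S (hS : Sᵀ * J n * S = J n ∨ Sᵀ * J n * S = -(J n)) :
    IsUnit S.det := by
  rcases det_S hS with h | h <;> rw [h]
  · exact isUnit_one
  · exact isUnit_one.neg


theorem Sinv_J_symp (h : Sᵀ * J n * S = J n) : S⁻¹ * J n * (S⁻¹)ᵀ = J n := by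
  have h2 := congrArg (fun M : Matrix (Fin (2*n)) (Fin (2*n)) ℝ => M⁻¹) h
  rw [Matrix.mul_inv_rev, Matrix.mul_inv_rev, J_inv] at h2
  rw [Matrix.transpose_nonsing_inv]
  have h3 : S⁻¹ * (-(J n) * (Sᵀ)⁻¹) = -(S⁻¹ * J n * (Sᵀ)⁻¹) := by
    rw [neg_mul, mul_neg, Matrix.mul_assoc]
  rw [h3] at h2
  exact neg_injective h2

theorem Sinv_J_antisymp (h : Sᵀ * J n * S = -(J n)) : S⁻¹ * J n * (S⁻¹)ᵀ = -(J n) := by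
  have h2 := congrArg (fun M : Matrix (Fin (2*n)) (Fin (2*n)) ℝ => M⁻¹) h
  rw [Matrix.mul_inv_rev, Matrix.mul_inv_rev, J_inv, neg_J_inv] at h2
  rw [Matrix.transpose_nonsing_inv]
  have h3 : S⁻¹ * (-(J n) * (Sᵀ)⁻¹) = -(S⁻¹ * J n * (Sᵀ)⁻¹) := by
    rw [neg_mul, mul_neg, Matrix.mul_assoc]
  rw [h3] at h2
  exact neg_eq_iff_eq_neg.mp h2

theorem J_mul_Sinv_symp (hu : IsUnit S.det) (h : Sᵀ * J n * S = J n) :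
    J n * S⁻¹ = Sᵀ * J n := by
  have h2 : Sᵀ * J n * S * S⁻¹ = J n * S⁻¹ := by rw [h]
  rw [Matrix.mul_assoc (Sᵀ * J n), Matrix.mul_nonsing_inv _ hu, Matrix.mul_one] at h2
  exact h2.symm

theorem J_mul_Sinv_antisymp (hu : IsUnit S.det) (h : Sᵀ * J n * S = -(J n)) :
    J n * S⁻¹ = -(Sᵀ * J n) := by
  have h2 : Sᵀ * J n * S * S⁻¹ = -(J n) * S⁻¹ := by rw [h]
  rw [Matrix.mul_assoc (Sᵀ * J n), Matrix.mul_nonsing_inv _ hu, Matrix.mul_one, neg_mul] at h2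
  exact (neg_eq_iff_eq_neg.mpr h2).symm

theorem symplForm_Sinv_symp (hu : IsUnit S.det) (h : Sᵀ * J n * S = J n) (ζ w : PS n) :
    symplForm n ζ (S⁻¹ *ᵥ w) = symplForm n (S *ᵥ ζ) w := by
  unfold RSUP.symplForm
  rw [Matrix.mulVec_mulVec]
  have key : (J n)ᵀ * S⁻¹ = Sᵀ * (J n)ᵀ := by
    simp [J_transpose, neg_mul, mul_neg, J_mul_Sinv_symp hu h]
  rw [key, ← Matrix.mulVec_mulVec, Matrix.dotProduct_mulVec, Matrix.vecMul_transpose]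

theorem symplForm_Sinv_antisymp (hu : IsUnit S.det) (h : Sᵀ * J n * S = -(J n)) (ζ w : PS n) :
    symplForm n ζ (S⁻¹ *ᵥ w) = -symplForm n (S *ᵥ ζ) w := by
  unfold RSUP.symplForm
  rw [Matrix.mulVec_mulVec]
  have key : (J n)ᵀ * S⁻¹ = -(Sᵀ * (J n)ᵀ) := by
    simp [J_transpose, neg_mul, mul_neg, J_mul_Sinv_antisymp hu h]
  rw [key, Matrix.neg_mulVec, dotProduct_neg, ← Matrix.mulVec_mulVec,
    Matrix.dotProduct_mulVec, Matrix.vecMul_transpose]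

end Smat

section CoV
variable {d : ℕ} {E : Type*} [NormedAddCommGroup E] [NormedSpace ℝ E]

theorem mulVec_eq_toLin' (M : Matrix (Fin d) (Fin d) ℝ) :
    (fun z : Fin d → ℝ => M *ᵥ z) = ⇑(Matrix.toLin' M) := by
  ext z i; rw [Matrix.toLin'_apply]

theorem measurable_mulVec (M : Matrix (Fin d) (Fin d) ℝ) :
    Measurable (fun z : Fin d → ℝ => M *ᵥ z) := by
  rw [mulVec_eq_toLin']
  exact (LinearMap.continuous_on_pi _).measurable

theorem map_mulVec_volume (M : Matrix (Fin d) (Fin d) ℝ) (h : M.det ≠ 0) :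
    Measure.map (fun z : Fin d → ℝ => M *ᵥ z) volume
      = ENNReal.ofReal |M.det⁻¹| • volume := by
  rw [mulVec_eq_toLin']
  exact Real.map_matrix_volume_pi_eq_smul_volume_pi h

theorem measurePreserving_mulVec (M : Matrix (Fin d) (Fin d) ℝ)
    (h : M.det = 1 ∨ M.det = -1) :
    MeasurePreserving (fun z : Fin d → ℝ => M *ᵥ z) volume volume := by
  refine ⟨measurable_mulVec M, ?_⟩
  rw [map_mulVec_volume M (by rcases h with h|h <;> rw [h] <;> norm_num)]
  have h1 : |M.det⁻¹| = 1 := by rcases h with h|h <;> rw [h] <;> norm_num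
  rw [h1, ENNReal.ofReal_one, one_smul]

theorem measurableEmbedding_mulVec (M : Matrix (Fin d) (Fin d) ℝ) (h : IsUnit M.det) :
    MeasurableEmbedding (fun z : Fin d → ℝ => M *ᵥ z) := by
  letI := M.invertibleOfIsUnitDet h
  let e := (M.toLinearEquiv' this).toContinuousLinearEquiv
  have he : (fun z : Fin d → ℝ => M *ᵥ z) = ⇑e := by
    rw [mulVec_eq_toLin']
    ext z i
    show Matrix.toLin' M z i = e z i
    rw [LinearEquiv.coe_toContinuousLinearEquiv']
    rfl
  rw [he]
  exact e.toHomeomorph.measurableEmbedding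

theorem integral_comp_mulVec (M : Matrix (Fin d) (Fin d) ℝ) (h : M.det = 1 ∨ M.det = -1)
    (f : (Fin d → ℝ) → E) : (∫ z, f (M *ᵥ z)) = ∫ z, f z :=
  (measurePreserving_mulVec M h).integral_comp
    (measurableEmbedding_mulVec M (by rcases h with h|h <;> rw [h]
                                      exacts [isUnit_one, isUnit_one.neg])) f

theorem integrable_comp_mulVec_iff (M : Matrix (Fin d) (Fin d) ℝ) (h : M.det ≠ 0)
    (f : (Fin d → ℝ) → E) :
    Integrable (fun z => f (M *ᵥ z)) volume ↔ Integrable f volume := by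
  have hemb := measurableEmbedding_mulVec M (isUnit_iff_ne_zero.mpr h)
  have : (fun z => f (M *ᵥ z)) = f ∘ (fun z : Fin d → ℝ => M *ᵥ z) := rfl
  rw [this, ← MeasurableEmbedding.integrable_map_iff hemb, map_mulVec_volume M h,
    integrable_smul_measure (by simp [h]) ENNReal.ofReal_ne_top]

theorem aesm_comp_mulVec (M : Matrix (Fin d) (Fin d) ℝ) (h : M.det ≠ 0)
    {f : (Fin d → ℝ) → E} (hf : AEStronglyMeasurable f volume) :
    AEStronglyMeasurable (fun z => f (M *ᵥ z)) volume := by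
  have hq : Measure.QuasiMeasurePreserving (fun z : Fin d → ℝ => M *ᵥ z) volume volume :=
    ⟨measurable_mulVec M, by
      rw [map_mulVec_volume M h]
      exact Measure.smul_absolutelyContinuous⟩
  exact hf.comp_quasiMeasurePreserving hq

end CoV

section Moments
variable {d : ℕ}

theorem sq_le_wsum (z : Fin d → ℝ) (i : Fin d) : z i ^ 2 ≤ ∑ k, z k ^ 2 :=
  Finset.single_le_sum (fun k _ => sq_nonneg (z k)) (Finset.mem_univ i)

theorem wsum_nonneg (z : Fin d → ℝ) : 0 ≤ ∑ k, z k ^ 2 :=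
  Finset.sum_nonneg fun k _ => sq_nonneg (z k)

theorem abs_coord_le (z : Fin d → ℝ) (i : Fin d) : |z i| ≤ 1 + ∑ k, z k ^ 2 := by
  have h1 : |z i| ≤ 1 + z i ^ 2 := by nlinarith [abs_nonneg (z i), _root_.sq_abs (z i)]
  linarith [sq_le_wsum z i, h1]

theorem abs_coord_mul_le (z : Fin d → ℝ) (i j : Fin d) :
    |z i * z j| ≤ 1 + ∑ k, z k ^ 2 := by
  have h1 : |z i * z j| ≤ (z i ^ 2 + z j ^ 2) / 2 := by
    rw [abs_mul]
    nlinarith [sq_nonneg (|z i| - |z j|), _root_.sq_abs (z i), _root_.sq_abs (z j), abs_nonneg (z i),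
      abs_nonneg (z j)]
  linarith [sq_le_wsum z i, sq_le_wsum z j, wsum_nonneg z]

/-- From integrability of `(1+|z|²)φ` get integrability of `φ` and its first
and second moments. -/
theorem moments_integrable {φ : (Fin d → ℝ) → ℝ}
    (hm : AEStronglyMeasurable φ (volume : Measure (Fin d → ℝ)))
    (hI : Integrable (fun z : Fin d → ℝ => (1 + ∑ k, z k ^ 2) * φ z) volume) :
    Integrable φ volume ∧ (∀ i, Integrable (fun z : Fin d → ℝ => z i * φ z) volume) ∧
      (∀ i j, Integrable (fun z : Fin d → ℝ => z i * z j * φ z) volume) := by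
  have hbound : ∀ z : Fin d → ℝ, ∀ c : ℝ, |c| ≤ 1 + ∑ k, z k ^ 2 →
      ‖c * φ z‖ ≤ ‖(1 + ∑ k, z k ^ 2) * φ z‖ := by
    intro z c hc
    rw [norm_mul, norm_mul]
    apply mul_le_mul_of_nonneg_right _ (norm_nonneg _)
    rw [Real.norm_eq_abs, Real.norm_eq_abs]
    calc |c| ≤ 1 + ∑ k, z k ^ 2 := hc
    _ ≤ |1 + ∑ k, z k ^ 2| := le_abs_self _
  refine ⟨?_, fun i => ?_, fun i j => ?_⟩
  · refine hI.mono hm (Filter.Eventually.of_forall fun z => ?_)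
    have := hbound z 1 (by simpa using by linarith [wsum_nonneg z])
    simpa using this
  · refine hI.mono (((measurable_pi_apply i).aestronglyMeasurable).mul hm)
      (Filter.Eventually.of_forall fun z => ?_)
    exact hbound z (z i) (abs_coord_le z i)
  · refine hI.mono ((((measurable_pi_apply i).mul (measurable_pi_apply j)).aestronglyMeasurable).mul hm)
      (Filter.Eventually.of_forall fun z => ?_)
    exact hbound z (z i * z j) (abs_coord_mul_le z i j)

/-- Weighted integrability is preserved under composition with an invertible
linear change of variables. -/
theorem weight_comp_integrable (M : Matrix (Fin d) (Fin d) ℝ) (h : M.det ≠ 0)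
    {φ : (Fin d → ℝ) → ℝ} (hpos : ∀ z, 0 ≤ φ z)
    (hm : AEStronglyMeasurable φ (volume : Measure (Fin d → ℝ)))
    (hI : Integrable (fun z : Fin d → ℝ => (1 + ∑ k, z k ^ 2) * φ z) volume) :
    Integrable (fun z : Fin d → ℝ => (1 + ∑ k, z k ^ 2) * φ (M *ᵥ z)) volume := by
  set C : ℝ := ∑ k : Fin d, ∑ l : Fin d, (M⁻¹ k l) ^ 2 with hC
  have hC0 : 0 ≤ C := Finset.sum_nonneg fun k _ => Finset.sum_nonneg fun l _ => sq_nonneg _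
  have hkey : ∀ w : Fin d → ℝ, 1 + ∑ k, (M⁻¹ *ᵥ w) k ^ 2 ≤ (1 + C) * (1 + ∑ k, w k ^ 2) := by
    intro w
    have hcs : ∀ k : Fin d, (M⁻¹ *ᵥ w) k ^ 2 ≤ (∑ l, (M⁻¹ k l) ^ 2) * ∑ l, w l ^ 2 := by
      intro k
      have h0 := Finset.sum_mul_sq_le_sq_mul_sq Finset.univ (fun l => M⁻¹ k l) w
      have he : (M⁻¹ *ᵥ w) k = ∑ l, M⁻¹ k l * w l := rfl
      rw [he]
      exact h0
    have hsum : ∑ k, (M⁻¹ *ᵥ w) k ^ 2 ≤ C * ∑ l, w l ^ 2 := by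
      rw [hC, Finset.sum_mul]
      exact Finset.sum_le_sum fun k _ => hcs k
    nlinarith [wsum_nonneg w, hsum, hC0]
  -- the auxiliary function in the `w` variable
  have hmeas2 : Measurable (fun w : Fin d → ℝ => 1 + ∑ k, (M⁻¹ *ᵥ w) k ^ 2) := by
    apply Measurable.const_add
    apply Finset.measurable_sum
    intro k _
    exact ((measurable_mulVec M⁻¹).eval (a := k)).pow_const 2
  have hh : Integrable (fun w : Fin d → ℝ => (1 + ∑ k, (M⁻¹ *ᵥ w) k ^ 2) * φ w) volume := by
    refine (hI.const_mul (1 + C)).mono (hmeas2.aestronglyMeasurable.mul hm)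
      (Filter.Eventually.of_forall fun w => ?_)
    rw [Real.norm_eq_abs, Real.norm_eq_abs, abs_mul, abs_mul]
    have h1 : 0 ≤ 1 + ∑ k, (M⁻¹ *ᵥ w) k ^ 2 := by positivity
    have h2 : 0 ≤ 1 + ∑ k, w k ^ 2 := by positivity
    rw [_root_.abs_of_nonneg h1, _root_.abs_of_nonneg (hpos w), abs_mul, _root_.abs_of_nonneg h2,
      _root_.abs_of_nonneg (hpos w)]
    calc (1 + ∑ k, (M⁻¹ *ᵥ w) k ^ 2) * φ w ≤ ((1 + C) * (1 + ∑ k, w k ^ 2)) * φ w :=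
          mul_le_mul_of_nonneg_right (hkey w) (hpos w)
    _ ≤ |1 + C| * ((1 + ∑ k, w k ^ 2) * φ w) := by
          rw [mul_assoc]
          exact mul_le_mul_of_nonneg_right (le_abs_self _)
            (mul_nonneg h2 (hpos w))
  have hcomp := (integrable_comp_mulVec_iff M h
    (fun w : Fin d → ℝ => (1 + ∑ k, (M⁻¹ *ᵥ w) k ^ 2) * φ w)).mpr hh
  refine hcomp.congr (Filter.Eventually.of_forall fun z => ?_)
  have hz : ∀ k, (M⁻¹ *ᵥ (M *ᵥ z)) k = z k := by
    intro k
    rw [Matrix.mulVec_mulVec, Matrix.nonsing_inv_mul M (isUnit_iff_ne_zero.mpr h),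
      Matrix.one_mulVec]
  simp only [hz]

end Moments

section CovTrans
variable {d : ℕ} {H : (Fin d → ℝ) → ℝ} {M : Matrix (Fin d) (Fin d) ℝ}

theorem mulVec_cancel (hdet : M.det = 1 ∨ M.det = -1) (z : Fin d → ℝ) :
    M⁻¹ *ᵥ (M *ᵥ z) = z := by
  rw [Matrix.mulVec_mulVec, Matrix.nonsing_inv_mul M
    (by rcases hdet with h|h <;> rw [h]; exacts [isUnit_one, isUnit_one.neg]),
    Matrix.one_mulVec]

theorem meanVec_comp (hdet : M.det = 1 ∨ M.det = -1)
    (h1 : ∀ i, Integrable (fun z : Fin d → ℝ => z i * H z) volume) :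
    meanVec (fun z => H (M *ᵥ z)) = M⁻¹ *ᵥ meanVec H := by
  funext i
  show (∫ z : Fin d → ℝ, z i * H (M *ᵥ z)) / (∫ z : Fin d → ℝ, H (M *ᵥ z))
      = ∑ j, M⁻¹ i j * ((∫ z : Fin d → ℝ, z j * H z) / ∫ z : Fin d → ℝ, H z)
  have hden : (∫ z : Fin d → ℝ, H (M *ᵥ z)) = ∫ z, H z :=
    integral_comp_mulVec M hdet H
  have hnum : (∫ z : Fin d → ℝ, z i * H (M *ᵥ z))
      = ∑ j, M⁻¹ i j * ∫ z : Fin d → ℝ, z j * H z := by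
    have h0 : (∫ z : Fin d → ℝ, z i * H (M *ᵥ z))
        = ∫ w : Fin d → ℝ, (M⁻¹ *ᵥ w) i * H w := by
      rw [← integral_comp_mulVec M hdet (fun w : Fin d → ℝ => (M⁻¹ *ᵥ w) i * H w)]
      congr 1
      funext z
      rw [mulVec_cancel hdet]
    rw [h0]
    have h1' : (fun w : Fin d → ℝ => (M⁻¹ *ᵥ w) i * H w)
        = fun w : Fin d → ℝ => ∑ j, M⁻¹ i j * (w j * H w) := by
      funext w
      show (∑ j, M⁻¹ i j * w j) * H w = _
      rw [Finset.sum_mul]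
      exact Finset.sum_congr rfl fun j _ => by ring
    rw [h1', integral_finset_sum]
    · exact Finset.sum_congr rfl fun j _ => integral_const_mul _ _
    · exact fun j _ => (h1 j).const_mul _
  rw [hden, hnum, Finset.sum_div]
  exact Finset.sum_congr rfl fun j _ => (mul_div_assoc _ _ _)

theorem Cov_comp (hdet : M.det = 1 ∨ M.det = -1)
    (h0 : Integrable H (volume : Measure (Fin d → ℝ)))
    (h1 : ∀ i, Integrable (fun z : Fin d → ℝ => z i * H z) volume)
    (h2 : ∀ i j, Integrable (fun z : Fin d → ℝ => z i * z j * H z) volume) :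
    Cov (fun z => H (M *ᵥ z)) = M⁻¹ * Cov H * (M⁻¹)ᵀ := by
  have hmean := meanVec_comp hdet h1
  set μ : Fin d → ℝ := meanVec H with hμ
  have hint : ∀ k l : Fin d,
      Integrable (fun w : Fin d → ℝ => (w k - μ k) * (w l - μ l) * H w) volume := by
    intro k l
    have he : (fun w : Fin d → ℝ => (w k - μ k) * (w l - μ l) * H w)
        = fun w : Fin d → ℝ => w k * w l * H w - μ k * (w l * H w)
            - μ l * (w k * H w) + (μ k * μ l) * H w := by
      funext w; ring
    rw [he]
    exact (((h2 k l).sub ((h1 l).const_mul _)).sub ((h1 k).const_mul _)).add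
      (h0.const_mul _)
  ext i j
  show (∫ z : Fin d → ℝ, (z i - meanVec (fun z => H (M *ᵥ z)) i)
          * (z j - meanVec (fun z => H (M *ᵥ z)) j) * H (M *ᵥ z))
        / (∫ z : Fin d → ℝ, H (M *ᵥ z)) = _
  rw [hmean, integral_comp_mulVec M hdet H]
  have hnum : (∫ z : Fin d → ℝ, (z i - (M⁻¹ *ᵥ μ) i) * (z j - (M⁻¹ *ᵥ μ) j) * H (M *ᵥ z))
      = ∑ k, ∑ l, M⁻¹ i k * M⁻¹ j l *
          ∫ w : Fin d → ℝ, (w k - μ k) * (w l - μ l) * H w := by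
    have h0' : (∫ z : Fin d → ℝ, (z i - (M⁻¹ *ᵥ μ) i) * (z j - (M⁻¹ *ᵥ μ) j) * H (M *ᵥ z))
        = ∫ w : Fin d → ℝ, ((M⁻¹ *ᵥ w) i - (M⁻¹ *ᵥ μ) i) * ((M⁻¹ *ᵥ w) j - (M⁻¹ *ᵥ μ) j) * H w := by
      rw [← integral_comp_mulVec M hdet (fun w : Fin d → ℝ =>
        ((M⁻¹ *ᵥ w) i - (M⁻¹ *ᵥ μ) i) * ((M⁻¹ *ᵥ w) j - (M⁻¹ *ᵥ μ) j) * H w)]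
      congr 1
      funext z
      rw [mulVec_cancel hdet]
    rw [h0']
    have hdiff : ∀ (a : Fin d) (w : Fin d → ℝ),
        (M⁻¹ *ᵥ w) a - (M⁻¹ *ᵥ μ) a = ∑ k, M⁻¹ a k * (w k - μ k) := by
      intro a w
      show (∑ k, M⁻¹ a k * w k) - (∑ k, M⁻¹ a k * μ k) = _
      rw [← Finset.sum_sub_distrib]
      exact Finset.sum_congr rfl fun k _ => by ring
    have he : (fun w : Fin d → ℝ =>
        ((M⁻¹ *ᵥ w) i - (M⁻¹ *ᵥ μ) i) * ((M⁻¹ *ᵥ w) j - (M⁻¹ *ᵥ μ) j) * H w)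
        = fun w : Fin d → ℝ => ∑ p : Fin d × Fin d,
            M⁻¹ i p.1 * M⁻¹ j p.2 * ((w p.1 - μ p.1) * (w p.2 - μ p.2) * H w) := by
      funext w
      rw [hdiff i w, hdiff j w, Fintype.sum_prod_type, Finset.sum_mul_sum, Finset.sum_mul]
      refine Finset.sum_congr rfl fun k _ => ?_
      rw [Finset.sum_mul]
      refine Finset.sum_congr rfl fun l _ => ?_
      ring
    rw [he, integral_finset_sum]
    · rw [Fintype.sum_prod_type]
      exact Finset.sum_congr rfl fun k _ => Finset.sum_congr rfl fun l _ =>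
        integral_const_mul _ _
    · exact fun p _ => (hint p.1 p.2).const_mul _
  rw [hnum]
  show _ = ∑ l, (∑ k, M⁻¹ i k * Cov H k l) * (M⁻¹)ᵀ l j
  rw [Finset.sum_comm]
  rw [Finset.sum_div]
  refine Finset.sum_congr rfl fun l _ => ?_
  rw [Finset.sum_div, Finset.sum_mul]
  refine Finset.sum_congr rfl fun k _ => ?_
  show M⁻¹ i k * M⁻¹ j l * (∫ w : Fin d → ℝ, (w k - μ k) * (w l - μ l) * H w)
      / (∫ z : Fin d → ℝ, H z) = M⁻¹ i k * Cov H k l * M⁻¹ j l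
  show _ = M⁻¹ i k * ((∫ w : Fin d → ℝ, (w k - μ k) * (w l - μ l) * H w)
      / (∫ z : Fin d → ℝ, H z)) * M⁻¹ j l
  field_simp

end CovTrans

section MatC
variable {n : ℕ}

theorem Cov_symm {d : ℕ} (H : (Fin d → ℝ) → ℝ) : (Cov H)ᵀ = Cov H := by
  ext i j
  show (∫ z : Fin d → ℝ, (z j - meanVec H j) * (z i - meanVec H i) * H z) / _ = _
  congr 2
  funext z
  ring

/-- Map a real matrix to a complex one. -/
def cmap {d e : ℕ} (A : Matrix (Fin d) (Fin e) ℝ) : Matrix (Fin d) (Fin e) ℂ :=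
  A.map (fun x => (x : ℂ))

theorem cmap_mul {d : ℕ} (A B : Matrix (Fin d) (Fin d) ℝ) :
    cmap (A * B) = cmap A * cmap B := by
  have : (fun x : ℝ => (x : ℂ)) = ⇑Complex.ofRealHom := rfl
  unfold cmap
  rw [this]
  exact Matrix.map_mul

theorem cmap_add {d : ℕ} (A B : Matrix (Fin d) (Fin d) ℝ) :
    cmap (A + B) = cmap A + cmap B := by
  unfold cmap
  ext i j
  simp

theorem cmap_sub {d : ℕ} (A B : Matrix (Fin d) (Fin d) ℝ) :
    cmap (A - B) = cmap A - cmap B := by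
  unfold cmap
  ext i j
  simp

theorem cmap_neg {d : ℕ} (A : Matrix (Fin d) (Fin d) ℝ) : cmap (-A) = -cmap A := by
  unfold cmap; ext i j; simp

theorem cmap_smul {d : ℕ} (r : ℝ) (A : Matrix (Fin d) (Fin d) ℝ) :
    cmap (r • A) = (r : ℂ) • cmap A := by
  unfold cmap; ext i j; simp

theorem cmap_transpose {d : ℕ} (A : Matrix (Fin d) (Fin d) ℝ) :
    cmap (Aᵀ) = (cmap A)ᵀ := by
  unfold cmap; ext i j; simp

theorem cmap_conjTranspose {d : ℕ} (A : Matrix (Fin d) (Fin d) ℝ) :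
    (cmap A)ᴴ = cmap (Aᵀ) := by
  unfold cmap
  ext i j
  simp [Matrix.conjTranspose_apply, Complex.conj_ofReal]

theorem Jc_eq_cmap (n : ℕ) : Jc n = cmap (J n) := rfl

/-- `RSmat` conjugation, symplectic case. -/
theorem RSmat_conj_symp (hb : ℝ) (A P : Matrix (Fin (2*n)) (Fin (2*n)) ℝ)
    (hP : P * J n * Pᵀ = J n) :
    RSmat n hb (P * A * Pᵀ) = cmap P * RSmat n hb A * (cmap P)ᴴ := by
  rw [cmap_conjTranspose]
  show cmap (P * A * Pᵀ) + (hb / 2) • Complex.I • Jc n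
      = cmap P * (cmap A + (hb / 2) • Complex.I • Jc n) * cmap (Pᵀ)
  rw [Matrix.mul_add, Matrix.add_mul, ← cmap_mul, ← cmap_mul]
  congr 1
  rw [Matrix.mul_smul, Matrix.mul_smul, Matrix.smul_mul, Matrix.smul_mul,
    Jc_eq_cmap, ← cmap_mul, ← cmap_mul, hP]

/-- `RSmat` conjugation, antisymplectic case. -/
theorem RSmat_conj_antisymp (hb : ℝ) (A P : Matrix (Fin (2*n)) (Fin (2*n)) ℝ)
    (hA : Aᵀ = A) (hP : P * J n * Pᵀ = -(J n)) :
    RSmat n hb (P * A * Pᵀ) = cmap P * (RSmat n hb A)ᵀ * (cmap P)ᴴ := by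
  rw [cmap_conjTranspose]
  have hRS : (RSmat n hb A)ᵀ = cmap A - (hb / 2) • Complex.I • Jc n := by
    show (cmap A + (hb / 2) • Complex.I • Jc n)ᵀ = _
    rw [Matrix.transpose_add, Matrix.transpose_smul, Matrix.transpose_smul,
      Jc_eq_cmap, ← cmap_transpose, ← cmap_transpose, J_transpose, hA, cmap_neg]
    rw [smul_neg, smul_neg, ← sub_eq_add_neg]
  rw [hRS]
  show cmap (P * A * Pᵀ) + (hb / 2) • Complex.I • Jc n
      = cmap P * (cmap A - (hb / 2) • Complex.I • Jc n) * cmap (Pᵀ)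
  rw [Matrix.mul_sub, Matrix.sub_mul, ← cmap_mul, ← cmap_mul]
  congr 1
  rw [Matrix.mul_smul, Matrix.mul_smul, Matrix.smul_mul, Matrix.smul_mul,
    Jc_eq_cmap, ← cmap_mul, ← cmap_mul, hP, cmap_neg, smul_neg, smul_neg, sub_neg_eq_add]

end MatC

section FTsec
variable {d : ℕ}

theorem FT_congr {f g : (Fin d → ℝ) → ℂ} (h : f =ᵐ[volume] g) : ∀ ω, FT f ω = FT g ω := by
  intro ω
  unfold RSUP.FT
  exact integral_congr_ae (h.mono fun x hx => by dsimp only; rw [hx])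

theorem FT_aestronglyMeasurable {f : (Fin d → ℝ) → ℂ}
    (hf : AEStronglyMeasurable f (volume : Measure (Fin d → ℝ))) :
    AEStronglyMeasurable (FT f) (volume : Measure (Fin d → ℝ)) := by
  have hfg := FT_congr hf.ae_eq_mk
  have hSM : StronglyMeasurable (FT (hf.mk f)) := by
    have hjoint : StronglyMeasurable (fun p : ((Fin d → ℝ) × (Fin d → ℝ)) =>
        hf.mk f p.2 * Complex.exp (-(2 * π * Complex.I) * (((∑ i, p.2 i * p.1 i) : ℝ) : ℂ))) := by
      apply StronglyMeasurable.mul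
      · exact hf.stronglyMeasurable_mk.comp_measurable measurable_snd
      · apply Continuous.stronglyMeasurable
        apply Complex.continuous_exp.comp
        apply Continuous.mul continuous_const
        apply Complex.continuous_ofReal.comp
        apply continuous_finset_sum
        intro i _
        exact ((continuous_apply i).comp continuous_snd).mul
          ((continuous_apply i).comp continuous_fst)
    exact hjoint.integral_prod_right'
  exact (hSM.aestronglyMeasurable).congr (Filter.Eventually.of_forall fun ω => (hfg ω).symm)

end FTsec

section SympFT
variable {n : ℕ} {hb : ℝ} {S : Matrix (Fin (2*n)) (Fin (2*n)) ℝ}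

/-- The symplectic Fourier transform written through `FT`. -/
theorem symplFT_eq_FT (hhb : 0 < hb) (Fc : PS n → ℂ) (ζ : PS n) :
    symplFT n hb Fc ζ
      = ((2 * π * hb) ^ n)⁻¹ • FT Fc (((2 * π * hb)⁻¹ • J n) *ᵥ ζ) := by
  unfold RSUP.symplFT RSUP.FT
  congr 1
  refine integral_congr_ae (Filter.Eventually.of_forall fun z => ?_)
  dsimp only
  congr 1
  congr 1
  have hsum : (∑ i, z i * (((2 * π * hb)⁻¹ • J n) *ᵥ ζ) i)
      = (2 * π * hb)⁻¹ * symplForm n ζ z := by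
    rw [Matrix.smul_mulVec]
    have h1 : (∑ i, z i * ((2 * π * hb)⁻¹ • (J n *ᵥ ζ)) i)
        = (2 * π * hb)⁻¹ * ∑ i, z i * (J n *ᵥ ζ) i := by
      rw [Finset.mul_sum]
      exact Finset.sum_congr rfl fun i _ => by
        show z i * ((2 * π * hb)⁻¹ * (J n *ᵥ ζ) i) = _
        ring
    rw [h1]
    congr 1
    show z ⬝ᵥ (J n *ᵥ ζ) = ζ ⬝ᵥ ((J n)ᵀ *ᵥ z)
    rw [Matrix.dotProduct_mulVec ζ, Matrix.vecMul_transpose, dotProduct_comm]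
  rw [hsum]
  have hne : (2 * π * hb : ℂ) ≠ 0 := by
    simp only [ne_eq]
    push_cast
    intro h
    have : (2 * π * hb : ℝ) ≠ 0 := by positivity
    exact this (by exact_mod_cast h)
  push_cast
  field_simp

theorem normSq_symplFT_eq (hhb : 0 < hb) (Fc : PS n → ℂ) (ζ : PS n) :
    ‖symplFT n hb Fc ζ‖ ^ 2
      = (((2 * π * hb) ^ n)⁻¹) ^ 2 * ‖FT Fc (((2 * π * hb)⁻¹ • J n) *ᵥ ζ)‖ ^ 2 := by
  rw [symplFT_eq_FT hhb, norm_smul]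
  rw [mul_pow]
  congr 2
  rw [Real.norm_eq_abs, _root_.abs_of_nonneg]
  positivity

/-- Composition with a symplectic matrix. -/
theorem symplFT_comp_symp (hdet : S.det = 1 ∨ S.det = -1) (h : Sᵀ * J n * S = J n)
    (F : PS n → ℝ) (ζ : PS n) :
    symplFT n hb (fun z => ((F (S *ᵥ z) : ℝ) : ℂ)) ζ
      = symplFT n hb (fun z => ((F z : ℝ) : ℂ)) (S *ᵥ ζ) := by
  have hu : IsUnit S.det := by
    rcases hdet with h'|h' <;> rw [h']; exacts [isUnit_one, isUnit_one.neg]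
  have key := integral_comp_mulVec S hdet (fun w : PS n => ((F w : ℝ) : ℂ) *
    Complex.exp (-(Complex.I / (hb:ℂ)) * ((symplForm n ζ (S⁻¹ *ᵥ w) : ℝ) : ℂ)))
  unfold RSUP.symplFT
  congr 1
  refine Eq.trans (integral_congr_ae (Filter.Eventually.of_forall fun z => ?_))
    (Eq.trans key (integral_congr_ae (Filter.Eventually.of_forall fun w => ?_)))
  · dsimp only
    rw [mulVec_cancel hdet]
  · dsimp only
    rw [symplForm_Sinv_symp hu h]

/-- Composition with an antisymplectic matrix gives the complex conjugate. -/
theorem symplFT_comp_antisymp (hdet : S.det = 1 ∨ S.det = -1) (h : Sᵀ * J n * S = -(J n))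
    (F : PS n → ℝ) (ζ : PS n) :
    symplFT n hb (fun z => ((F (S *ᵥ z) : ℝ) : ℂ)) ζ
      = (starRingEnd ℂ) (symplFT n hb (fun z => ((F z : ℝ) : ℂ)) (S *ᵥ ζ)) := by
  have hu : IsUnit S.det := by
    rcases hdet with h'|h' <;> rw [h']; exacts [isUnit_one, isUnit_one.neg]
  have key := integral_comp_mulVec S hdet (fun w : PS n => ((F w : ℝ) : ℂ) *
    Complex.exp (-(Complex.I / (hb:ℂ)) * ((symplForm n ζ (S⁻¹ *ᵥ w) : ℝ) : ℂ)))
  unfold RSUP.symplFT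
  rw [Complex.real_smul, Complex.real_smul, _root_.map_mul, Complex.conj_ofReal]
  congr 1
  rw [← integral_conj]
  refine Eq.trans (integral_congr_ae (Filter.Eventually.of_forall fun z => ?_))
    (Eq.trans key (integral_congr_ae (Filter.Eventually.of_forall fun w => ?_)))
  · dsimp only
    rw [mulVec_cancel hdet]
  · dsimp only
    rw [symplForm_Sinv_antisymp hu h, _root_.map_mul, Complex.conj_ofReal, ← Complex.exp_conj]
    congr 2
    rw [_root_.map_mul, map_neg, map_div₀, Complex.conj_I, Complex.conj_ofReal, Complex.conj_ofReal]
    push_cast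
    ring

theorem norm_symplFT_comp (hdet : S.det = 1 ∨ S.det = -1)
    (hS : Sᵀ * J n * S = J n ∨ Sᵀ * J n * S = -(J n)) (F : PS n → ℝ) (ζ : PS n) :
    ‖symplFT n hb (fun z => ((F (S *ᵥ z) : ℝ) : ℂ)) ζ‖
      = ‖symplFT n hb (fun z => ((F z : ℝ) : ℂ)) (S *ᵥ ζ)‖ := by
  rcases hS with h | h
  · rw [symplFT_comp_symp hdet h]
  · rw [symplFT_comp_antisymp hdet h, RCLike.norm_conj]

end SympFT
end RSUPAux

open RSUPAux

/-- If a real function `F ∈ M¹₂(ℝ^{2n})` with finite covariance matrix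
satisfies the refined Robertson–Schrödinger uncertainty principle, then for every
`S ∈ ASp(n)` (i.e. `SᵀJS = J` or `SᵀJS = −J`), the function `F ∘ S` also satisfies the
refined Robertson–Schrödinger uncertainty principle. -/
theorem refined_RSUP_symplectic_covariance
    (n : ℕ) (hb : ℝ) (hhb : 0 < hb)
    (F : PS n → ℝ)
    (hM12 : InM12 (fun z => (F z : ℂ))) (hcov : HasFiniteCov F)
    (hRSUP : SatisfiesRefinedRSUP n hb F)
    (S : Matrix (Fin (2*n)) (Fin (2*n)) ℝ)
    (hS : Sᵀ * J n * S = J n ∨ Sᵀ * J n * S = -(J n)) :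
    SatisfiesRefinedRSUP n hb (fun z => F (S *ᵥ z)) := by
  have hdet : S.det = 1 ∨ S.det = -1 := det_S hS
  have hu : IsUnit S.det := isUnit_det_S hS
  -- basic integral identities
  have hIF2 : (∫ z : PS n, F (S *ᵥ z) ^ 2) = ∫ z : PS n, F z ^ 2 :=
    integral_comp_mulVec S hdet (fun z => F z ^ 2)
  have hpurity : purity n hb (fun z => F (S *ᵥ z)) = purity n hb F := by
    unfold RSUP.purity; rw [hIF2]
  -- pointwise composition identities
  have hnormSq : normSq2 (fun z => F (S *ᵥ z)) = fun z => normSq2 F (S *ᵥ z) := by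
    funext z
    unfold RSUP.normSq2
    rw [hIF2]
  have hnFT : nFTsq n hb (fun z => F (S *ᵥ z)) = fun ζ => nFTsq n hb F (S *ᵥ ζ) := by
    funext ζ
    unfold RSUP.nFTsq
    rw [hIF2, norm_symplFT_comp hdet hS]
  -- measurability facts
  have hFc_aesm : AEStronglyMeasurable (fun z => (F z : ℂ)) (volume : Measure (PS n)) :=
    hM12.1.aestronglyMeasurable
  have hF_aesm : AEStronglyMeasurable F (volume : Measure (PS n)) := by
    have : F = fun z => ((F z : ℂ)).re := by funext z; rw [Complex.ofReal_re]
    rw [this]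
    exact Complex.continuous_re.comp_aestronglyMeasurable hFc_aesm
  have hFT_aesm : AEStronglyMeasurable (FT (fun z => (F z : ℂ))) (volume : Measure (PS n)) :=
    FT_aestronglyMeasurable hFc_aesm
  have hwmeas : Measurable (fun z : PS n => 1 + ∑ k, z k ^ 2) :=
    measurable_const.add (Finset.measurable_sum _ fun k _ => (measurable_pi_apply k).pow_const 2)
  have hw_nonneg : ∀ z : PS n, (0:ℝ) ≤ 1 + ∑ k, z k ^ 2 := fun z => by positivity
  -- split the M₁² weight integrability
  have hw1 : Integrable (fun z : PS n => (1 + ∑ k, z k ^ 2) * F z ^ 2) volume := by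
    refine hM12.2.mono ((hwmeas.aestronglyMeasurable.mul
      ((hF_aesm.mul hF_aesm).congr (Filter.Eventually.of_forall fun z => (sq (F z)).symm))))
      (Filter.Eventually.of_forall fun z => ?_)
    dsimp only
    rw [Real.norm_eq_abs, Real.norm_eq_abs, abs_mul, abs_mul]
    refine mul_le_mul_of_nonneg_left ?_ (abs_nonneg _)
    rw [_root_.abs_of_nonneg (sq_nonneg (F z)),
      _root_.abs_of_nonneg (add_nonneg (sq_nonneg _) (sq_nonneg _))]
    have h1 : F z ^ 2 = ‖(F z : ℂ)‖ ^ 2 := by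
      rw [Complex.norm_real, Real.norm_eq_abs, _root_.sq_abs]
    nlinarith [sq_nonneg ‖FT (fun w => (F w : ℂ)) z‖]
  have hw2 : Integrable (fun z : PS n => (1 + ∑ k, z k ^ 2) * ‖FT (fun w => (F w : ℂ)) z‖ ^ 2) volume := by
    refine hM12.2.mono ((hwmeas.aestronglyMeasurable.mul
      ((hFT_aesm.norm.mul hFT_aesm.norm).congr
        (Filter.Eventually.of_forall fun z => (sq _).symm))))
      (Filter.Eventually.of_forall fun z => ?_)
    dsimp only
    rw [Real.norm_eq_abs, Real.norm_eq_abs, abs_mul, abs_mul]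
    refine mul_le_mul_of_nonneg_left ?_ (abs_nonneg _)
    rw [_root_.abs_of_nonneg (sq_nonneg (‖FT (fun w => (F w : ℂ)) z‖)),
      _root_.abs_of_nonneg (add_nonneg (sq_nonneg _) (sq_nonneg _))]
    nlinarith [sq_nonneg ‖(F z : ℂ)‖]
  -- moment triple for `normSq2 F`
  have hφ1_eq : normSq2 F = fun z => F z ^ 2 * (∫ w : PS n, F w ^ 2)⁻¹ := by
    funext z
    unfold RSUP.normSq2
    rw [div_eq_mul_inv]
  have hsqF_aesm : AEStronglyMeasurable (fun z : PS n => F z ^ 2) volume :=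
    (hF_aesm.mul hF_aesm).congr (Filter.Eventually.of_forall fun z => (sq (F z)).symm)
  have hφ1_aesm : AEStronglyMeasurable (normSq2 F) (volume : Measure (PS n)) := by
    rw [hφ1_eq]
    exact hsqF_aesm.mul_const _
  have h1I : Integrable (fun z : PS n => (1 + ∑ k, z k ^ 2) * normSq2 F z) volume := by
    refine (hw1.mul_const ((∫ w : PS n, F w ^ 2)⁻¹)).congr
      (Filter.Eventually.of_forall fun z => ?_)
    rw [hφ1_eq]
    dsimp only
    ring
  obtain ⟨h10, h11, h12⟩ := moments_integrable hφ1_aesm h1I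
  -- moment triple for `nFTsq n hb F`
  have hM₀ : ((2 * π * hb)⁻¹ • J n).det ≠ 0 := by
    rw [Matrix.det_smul]
    have h1 : ((2 * π * hb)⁻¹ : ℝ) ≠ 0 := by positivity
    exact mul_ne_zero (pow_ne_zero _ h1) (J_det_ne_zero n)
  have hFTsq_aesm : AEStronglyMeasurable
      (fun w : PS n => ‖FT (fun v => (F v : ℂ)) w‖ ^ 2) volume :=
    (hFT_aesm.norm.mul hFT_aesm.norm).congr (Filter.Eventually.of_forall fun z => (sq _).symm)
  have hφ2_eq : nFTsq n hb F = fun ζ =>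
      ((((2 * π * hb) ^ n)⁻¹) ^ 2
        * ‖FT (fun v => (F v : ℂ)) (((2 * π * hb)⁻¹ • J n) *ᵥ ζ)‖ ^ 2)
        * (∫ w : PS n, F w ^ 2)⁻¹ := by
    funext ζ
    unfold RSUP.nFTsq
    rw [div_eq_mul_inv, normSq_symplFT_eq hhb]
  have hφ2_aesm : AEStronglyMeasurable (nFTsq n hb F) (volume : Measure (PS n)) := by
    rw [hφ2_eq]
    exact ((aesm_comp_mulVec _ hM₀ hFTsq_aesm).const_mul _).mul_const _
  have h2I : Integrable (fun ζ : PS n => (1 + ∑ k, ζ k ^ 2) * nFTsq n hb F ζ) volume := by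
    have base := weight_comp_integrable ((2 * π * hb)⁻¹ • J n) hM₀
      (φ := fun w => ‖FT (fun v => (F v : ℂ)) w‖ ^ 2) (fun w => sq_nonneg _) hFTsq_aesm hw2
    refine (base.const_mul ((((2 * π * hb) ^ n)⁻¹) ^ 2 * (∫ w : PS n, F w ^ 2)⁻¹)).congr
      (Filter.Eventually.of_forall fun ζ => ?_)
    rw [hφ2_eq]
    dsimp only
    ring
  obtain ⟨h20, h21, h22⟩ := moments_integrable hφ2_aesm h2I
  -- covariance transformation identities
  have hCovF : Cov (fun z => F (S *ᵥ z)) = S⁻¹ * Cov F * (S⁻¹)ᵀ :=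
    Cov_comp hdet hcov.1 hcov.2.1 hcov.2.2
  have hCov1 : Cov (normSq2 (fun z => F (S *ᵥ z))) = S⁻¹ * Cov (normSq2 F) * (S⁻¹)ᵀ := by
    rw [hnormSq]
    exact Cov_comp hdet h10 h11 h12
  have hCov2 : Cov (nFTsq n hb (fun z => F (S *ᵥ z)))
      = S⁻¹ * Cov (nFTsq n hb F) * (S⁻¹)ᵀ := by
    rw [hnFT]
    exact Cov_comp hdet h20 h21 h22
  have hA : Cov (normSq2 (fun z => F (S *ᵥ z)))
        + (4:ℝ)⁻¹ • Cov (nFTsq n hb (fun z => F (S *ᵥ z)))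
      = S⁻¹ * (Cov (normSq2 F) + (4:ℝ)⁻¹ • Cov (nFTsq n hb F)) * (S⁻¹)ᵀ := by
    rw [hCov1, hCov2, Matrix.mul_add, Matrix.add_mul]
    congr 1
    rw [Matrix.mul_smul, Matrix.smul_mul]
  -- final matrix assembly
  rcases hS with h | h
  · -- symplectic case
    have hPJ : S⁻¹ * J n * (S⁻¹)ᵀ = J n := Sinv_J_symp h
    have hRM : refinedMat n hb (fun z => F (S *ᵥ z))
        = cmap S⁻¹ * refinedMat n hb F * (cmap S⁻¹)ᴴ := by
      unfold RSUP.refinedMat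
      rw [hpurity, hA, RSmat_conj_symp hb _ _ hPJ, Matrix.mul_smul, Matrix.smul_mul]
    have hRC : RSmat n hb (Cov (fun z => F (S *ᵥ z)))
        = cmap S⁻¹ * RSmat n hb (Cov F) * (cmap S⁻¹)ᴴ := by
      rw [hCovF]
      exact RSmat_conj_symp hb _ _ hPJ
    refine ⟨?_, ?_⟩
    · rw [hRC, hRM, ← Matrix.sub_mul, ← Matrix.mul_sub]
      exact hRSUP.1.mul_mul_conjTranspose_same _
    · rw [hRM]
      exact hRSUP.2.mul_mul_conjTranspose_same _
  · -- antisymplectic case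
    have hPJ : S⁻¹ * J n * (S⁻¹)ᵀ = -(J n) := Sinv_J_antisymp h
    have hsymA : (Cov (normSq2 F) + (4:ℝ)⁻¹ • Cov (nFTsq n hb F))ᵀ
        = Cov (normSq2 F) + (4:ℝ)⁻¹ • Cov (nFTsq n hb F) := by
      rw [Matrix.transpose_add, Matrix.transpose_smul, Cov_symm, Cov_symm]
    have hRM : refinedMat n hb (fun z => F (S *ᵥ z))
        = cmap S⁻¹ * (refinedMat n hb F)ᵀ * (cmap S⁻¹)ᴴ := by
      unfold RSUP.refinedMat
      rw [hpurity, hA, RSmat_conj_antisymp hb _ _ hsymA hPJ, Matrix.transpose_smul,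
        Matrix.mul_smul, Matrix.smul_mul]
    have hRC : RSmat n hb (Cov (fun z => F (S *ᵥ z)))
        = cmap S⁻¹ * (RSmat n hb (Cov F))ᵀ * (cmap S⁻¹)ᴴ := by
      rw [hCovF]
      exact RSmat_conj_antisymp hb _ _ (Cov_symm F) hPJ
    refine ⟨?_, ?_⟩
    · rw [hRC, hRM, ← Matrix.sub_mul, ← Matrix.mul_sub, ← Matrix.transpose_sub]
      exact (hRSUP.1.transpose).mul_mul_conjTranspose_same _
    · rw [hRM]
      exact (hRSUP.2.transpose).mul_mul_conjTranspose_same _
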